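/- Define learning rates α_t = (H+1)/(H+t) for t ≥ 1, and weights α_t^i = α_i · ∏_{j=i+1}^t (1 − α_j) for 1 ≤ i ≤ t. Then for every i ≥ 1: ∑_{t=i}^∞ α_t^i = 1 + 1/H. -/

import Mathlib

/-- Learning rate `α_t = (H+1)/(H+t)`. -/
noncomputable def lr (H t : ℕ) : ℝ := (H + 1) / (H + t)

/-- Weight `α_t^i = α_i ∏_{j=i+1}^t (1 - α_j)`. -/
noncomputable def lrW (H t i : ℕ) : ℝ :=
  lr H i * ∏ j ∈ Finset.Icc (i + 1) t, (1 - lr H j)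

theorem stmt6 (H : ℕ) (hH : 1 ≤ H) (i : ℕ) (hi : 1 ≤ i) :
    ∑' t : ℕ, (if i ≤ t then lrW H t i else 0) = 1 + 1 / (H : ℝ) := by
  have hH0 : (0:ℝ) < H := by exact_mod_cast hH
  have hHne : (H:ℝ) ≠ 0 := ne_of_gt hH0
  have hHi : (0:ℝ) < (H:ℝ) + i := by positivity
  set g : ℕ → ℝ := fun t => if i ≤ t then lrW H t i else 0 with hg
  set F : ℕ → ℝ := fun n => lrW H n i * ((H:ℝ) + n) / H with hF
  -- recurrence
  have hrec : ∀ t, i ≤ t → lrW H (t+1) i = lrW H t i * ((t:ℝ) / ((H:ℝ) + t + 1)) := by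
    intro t ht
    have h1 : i + 1 ≤ t + 1 := by omega
    have hden : (0:ℝ) < (H:ℝ) + t + 1 := by positivity
    have : (1 : ℝ) - lr H (t+1) = (t:ℝ) / ((H:ℝ) + t + 1) := by
      rw [lr]
      push_cast
      field_simp
      ring
    rw [lrW, Finset.prod_Icc_succ_top h1, this, lrW]
    ring
  have hgF : ∀ t, i ≤ t → g t = F t - F (t+1) := by
    intro t ht
    have hden : ((H:ℝ) + t + 1) ≠ 0 := by positivity
    simp only [hg, hF, if_pos ht, hrec t ht]
    push_cast
    field_simp
    ring
  -- partial sums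
  have hpart : ∀ n, i ≤ n → ∑ t ∈ Finset.range n, g t = F i - F n := by
    intro n hn
    induction n with
    | zero => omega
    | succ n ih =>
      rcases Nat.lt_or_ge n i with h | h
      · have hni : n + 1 = i := by omega
        have hz : ∑ t ∈ Finset.range (n+1), g t = 0 := by
          apply Finset.sum_eq_zero
          intro t htm
          simp only [Finset.mem_range] at htm
          simp [hg, if_neg (by omega : ¬ i ≤ t)]
        rw [hz, hni]; ring
      · rw [Finset.sum_range_succ, ih h, hgF n h]; ring
  -- F i = 1 + 1/H
  have hFi : F i = 1 + 1 / (H:ℝ) := by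
    simp only [hF, lrW, lr]
    rw [Finset.Icc_eq_empty (by omega)]
    rw [Finset.prod_empty]
    field_simp
  -- nonnegativity
  have hW : ∀ n, 0 ≤ lrW H n i := by
    intro n
    apply mul_nonneg
    · exact div_nonneg (by positivity) (by positivity)
    · apply Finset.prod_nonneg
      intro j hj
      simp only [Finset.mem_Icc] at hj
      have hj1 : 1 ≤ j := by omega
      have hj0 : (1:ℝ) ≤ (j:ℝ) := by exact_mod_cast hj1
      have : lr H j ≤ 1 := by
        rw [lr]
        rw [div_le_one (by positivity)]
        linarith
      linarith
  have hFnn : ∀ n, 0 ≤ F n := by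
    intro n
    exact div_nonneg (mul_nonneg (hW n) (by positivity)) hH0.le
  -- bound: F n ≤ F i * i / n for n ≥ i
  have hbound : ∀ n, i ≤ n → F n ≤ F i * i / n := by
    intro n hn
    induction n with
    | zero => omega
    | succ n ih =>
      rcases Nat.lt_or_ge n i with h | h
      · have : n + 1 = i := by omega
        rw [this]
        have hi0 : (0:ℝ) < (i:ℝ) := by exact_mod_cast hi
        rw [mul_div_assoc, div_self (ne_of_gt hi0), mul_one]
      · have hFn := ih h
        have hn0 : (0:ℝ) < (n:ℝ) := by exact_mod_cast Nat.lt_of_lt_of_le hi h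
        have hstep : F (n+1) = F n * ((n:ℝ) / ((H:ℝ) + n)) := by
          simp only [hF, hrec n h]
          push_cast
          field_simp
          ring
        have hfrac : (n:ℝ) / ((H:ℝ) + n) ≤ (n:ℝ) / ((n:ℝ) + 1) := by
          apply div_le_div_of_nonneg_left hn0.le (by positivity)
          have : (1:ℝ) ≤ (H:ℝ) := by exact_mod_cast hH
          linarith
        calc F (n+1) = F n * ((n:ℝ) / ((H:ℝ) + n)) := hstep
          _ ≤ (F i * i / n) * ((n:ℝ) / ((n:ℝ) + 1)) := by
              apply mul_le_mul hFn hfrac (by positivity)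
              exact div_nonneg (mul_nonneg (hFnn i) (by positivity)) hn0.le
          _ = F i * i / ((n:ℝ) + 1) := by field_simp
          _ = F i * i / ((n:ℕ) + 1 : ℕ) := by push_cast; ring
  -- F → 0
  have hF0 : Filter.Tendsto F Filter.atTop (nhds 0) := by
    have hlim : Filter.Tendsto (fun n : ℕ => F i * i / n) Filter.atTop (nhds 0) := by
      have := Filter.Tendsto.const_mul (F i * i) tendsto_one_div_atTop_nhds_zero_nat
      simpa [mul_one_div, div_eq_mul_inv] using this
    apply squeeze_zero' (Filter.Eventually.of_forall hFnn)
      (Filter.eventually_atTop.mpr ⟨i, hbound⟩) hlim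
  -- assemble
  have hgnn : ∀ t, 0 ≤ g t := by
    intro t
    simp only [hg]
    split
    · exact hW t
    · exact le_refl 0
  have hsum : HasSum g (1 + 1 / (H:ℝ)) := by
    rw [hasSum_iff_tendsto_nat_of_nonneg hgnn]
    have h1 : Filter.Tendsto (fun n => F i - F n) Filter.atTop (nhds (F i - 0)) :=
      Filter.Tendsto.const_sub _ hF0
    rw [sub_zero] at h1
    have h2 : Filter.Tendsto (fun n => ∑ t ∈ Finset.range n, g t) Filter.atTop (nhds (F i)) := by
      apply h1.congr'
      filter_upwards [Filter.eventually_atTop.mpr ⟨i, hpart⟩] with n hn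
      exact hn.symm
    rwa [hFi] at h2
  exact hsum.tsum_eq
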